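/- For every d ≥ 2: M_d ⊆ S^{d×d}_{++} (every element of M_d is positive definite), and the identity matrix Id belongs to M_d. -/

import Mathlib

/-- The set `𝕄_d = {Id − b⊗b : |b| = 1}` of symmetric matrices. -/
def MdBase (d : ℕ) : Set (Matrix (Fin d) (Fin d) ℝ) :=
  {M | ∃ b : Fin d → ℝ, (∑ i, (b i) ^ 2 = 1) ∧ M = 1 - Matrix.vecMulVec b b}

/-- The conic hull `𝕄_d^{conic}`: all finite sums `Σ αᵢ (Id − bᵢ⊗bᵢ)` with `αᵢ > 0`,
`|bᵢ| = 1`. -/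
def MdConic (d : ℕ) : Set (Matrix (Fin d) (Fin d) ℝ) :=
  {M | ∃ (m : ℕ) (α : Fin m → ℝ) (b : Fin m → Fin d → ℝ),
    (∀ i, 0 < α i) ∧ (∀ i, ∑ j, (b i j) ^ 2 = 1) ∧
    M = ∑ i, α i • (1 - Matrix.vecMulVec (b i) (b i))}

/-- `M_d`: the interior of `𝕄_d^{conic}` taken in the subspace `S^{d×d}` of symmetric
matrices (a matrix `R` is in the relative interior iff it is symmetric and there is an
open set `U ∋ R` of the matrix space such that every symmetric member of `U` lies in the
conic hull). -/
def Md (d : ℕ) : Set (Matrix (Fin d) (Fin d) ℝ) :=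
  {R | R.IsSymm ∧ ∃ U : Set (Matrix (Fin d) (Fin d) ℝ),
    IsOpen U ∧ R ∈ U ∧ ∀ S ∈ U, S.IsSymm → S ∈ MdConic d}


open Matrix

lemma quad_vecMulVec (d : ℕ) (b x : Fin d → ℝ) :
    x ⬝ᵥ (Matrix.vecMulVec b b *ᵥ x) = (b ⬝ᵥ x) * (b ⬝ᵥ x) := by
  simp [Matrix.mulVec, dotProduct, Matrix.vecMulVec, Finset.mul_sum, Finset.sum_mul]
  rw [Finset.sum_comm]
  congr 1; ext j; congr 1; ext k; ring

lemma sum_mulVec' {d m : ℕ} (M : Fin m → Matrix (Fin d) (Fin d) ℝ) (x : Fin d → ℝ) :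
    (∑ i, M i) *ᵥ x = ∑ i, M i *ᵥ x := by
  ext j
  simp [Matrix.mulVec, dotProduct, Matrix.sum_apply, Finset.sum_mul]
  rw [Finset.sum_comm]

lemma dotProduct_sum' {d m : ℕ} (x : Fin d → ℝ) (f : Fin m → Fin d → ℝ) :
    x ⬝ᵥ (∑ i, f i) = ∑ i, x ⬝ᵥ f i := by
  simp [dotProduct, Finset.sum_apply, Finset.mul_sum]
  rw [Finset.sum_comm]

lemma mdConic_quad_nonneg {d : ℕ} {M : Matrix (Fin d) (Fin d) ℝ}
    (h : M ∈ MdConic d) (x : Fin d → ℝ) : 0 ≤ x ⬝ᵥ (M *ᵥ x) := by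
  obtain ⟨m, α, b, hα, hb, rfl⟩ := h
  rw [sum_mulVec', dotProduct_sum']
  apply Finset.sum_nonneg
  intro i _
  rw [Matrix.smul_mulVec, Matrix.sub_mulVec, Matrix.one_mulVec, dotProduct_smul,
    dotProduct_sub, quad_vecMulVec]
  have hcs : (b i ⬝ᵥ x) * (b i ⬝ᵥ x) ≤ x ⬝ᵥ x := by
    have := Finset.sum_mul_sq_le_sq_mul_sq Finset.univ (b i) x
    rw [hb i, one_mul] at this
    simpa [dotProduct, sq] using this
  have h2 : (0:ℝ) ≤ x ⬝ᵥ x - (b i ⬝ᵥ x) * (b i ⬝ᵥ x) := by linarith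
  simpa using mul_nonneg (hα i).le h2

lemma col_sum_diag {d : ℕ} (U : Matrix (Fin d) (Fin d) ℝ) (c : Fin d → ℝ) :
    ∑ i, c i • Matrix.vecMulVec (fun j => U j i) (fun j => U j i)
      = U * Matrix.diagonal c * Uᵀ := by
  ext j k
  simp [Matrix.mul_apply, Matrix.diagonal_apply, Matrix.transpose_apply,
    Matrix.vecMulVec_apply, Finset.sum_apply, Matrix.sum_apply, Finset.sum_mul,
    mul_ite, ite_mul, mul_zero, zero_mul, Finset.sum_ite_eq, Finset.sum_ite_eq']
  congr 1; ext i; ring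

lemma near_one_mem_mdConic {d : ℕ} (hd : 2 ≤ d) (S : Matrix (Fin d) (Fin d) ℝ)
    (hS : S.IsSymm)
    (hnear : ∀ j k, |S j k - (1 : Matrix (Fin d) (Fin d) ℝ) j k| < 1 / (2 * (d:ℝ)^2)) :
    S ∈ MdConic d := by
  have hD : (2:ℝ) ≤ (d:ℝ) := by exact_mod_cast hd
  have hDpos : (0:ℝ) < (d:ℝ) := by linarith
  have hD1 : (0:ℝ) < (d:ℝ) - 1 := by linarith
  have h : S.IsHermitian := by
    rwa [Matrix.IsHermitian, Matrix.conjTranspose_eq_transpose_of_trivial]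
  set U : Matrix (Fin d) (Fin d) ℝ :=
    (Matrix.IsHermitian.eigenvectorUnitary h : Matrix (Fin d) (Fin d) ℝ) with hUdef
  set lam : Fin d → ℝ := h.eigenvalues with hlamdef
  have hspec : S = U * Matrix.diagonal lam * Uᵀ := by
    have := h.spectral_theorem
    simpa [hUdef, Matrix.star_eq_conjTranspose, Matrix.conjTranspose_eq_transpose_of_trivial] using this
  have hUU : U * Uᵀ = 1 := by
    have := (Matrix.mem_unitaryGroup_iff).mp (Matrix.IsHermitian.eigenvectorUnitary h).2
    rwa [Matrix.star_eq_conjTranspose, Matrix.conjTranspose_eq_transpose_of_trivial] at this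
  have hUU' : Uᵀ * U = 1 := by
    have := (Matrix.mem_unitaryGroup_iff').mp (Matrix.IsHermitian.eigenvectorUnitary h).2
    rwa [Matrix.star_eq_conjTranspose, Matrix.conjTranspose_eq_transpose_of_trivial] at this
  have htr : S.trace = ∑ i, lam i := by
    have h2 := congrArg Matrix.trace hspec
    rw [Matrix.trace_mul_cycle, hUU', one_mul, Matrix.trace_diagonal] at h2
    exact h2
  have hnorm : ∀ i, ∑ j, (U j i)^2 = 1 := by
    intro i
    have := congrFun (congrFun hUU' i) i
    simpa [Matrix.mul_apply, Matrix.one_apply, sq] using this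
  -- eigenvector equation for columns
  have hcol : ∀ i, (fun j => U j i) = ⇑(h.eigenvectorBasis i) := by
    intro i; ext j; exact Matrix.IsHermitian.eigenvectorUnitary_apply h j i
  have hmul : ∀ i, S *ᵥ (fun j => U j i) = lam i • (fun j => U j i) := by
    intro i; rw [hcol i]; exact h.mulVec_eigenvectorBasis i
  -- eigenvalue bound
  have habs : ∀ i, |lam i - 1| ≤ 1 / (2 * (d:ℝ)) := by
    intro i
    set v : Fin d → ℝ := fun j => U j i with hv
    have hvv : v ⬝ᵥ v = 1 := by
      simpa [dotProduct, sq] using hnorm i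
    have heig : v ⬝ᵥ (S *ᵥ v) = lam i := by
      rw [hmul i, dotProduct_smul]
      change lam i • (v ⬝ᵥ v) = lam i
      simp [hvv]
    have hlam1 : lam i - 1 = ∑ j, ∑ k, v j * ((S - 1) j k * v k) := by
      have hexp : v ⬝ᵥ ((S - 1) *ᵥ v) = lam i - 1 := by
        rw [Matrix.sub_mulVec, dotProduct_sub, heig, Matrix.one_mulVec, hvv]
      rw [← hexp]
      simp [dotProduct, Matrix.mulVec, Finset.mul_sum]
    have hsum_abs : |∑ j, ∑ k, v j * ((S - 1) j k * v k)|
        ≤ (1 / (2 * (d:ℝ)^2)) * (∑ j, |v j|) * (∑ j, |v j|) := by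
      calc |∑ j, ∑ k, v j * ((S - 1) j k * v k)|
          ≤ ∑ j, |∑ k, v j * ((S - 1) j k * v k)| := Finset.abs_sum_le_sum_abs _ _
        _ ≤ ∑ j, ∑ k, |v j| * ((1 / (2 * (d:ℝ)^2)) * |v k|) := by
            apply Finset.sum_le_sum; intro j _
            calc |∑ k, v j * ((S - 1) j k * v k)|
                ≤ ∑ k, |v j * ((S - 1) j k * v k)| := Finset.abs_sum_le_sum_abs _ _
              _ ≤ ∑ k, |v j| * ((1 / (2 * (d:ℝ)^2)) * |v k|) := by
                  apply Finset.sum_le_sum; intro k _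
                  rw [abs_mul, abs_mul]
                  have h1 : |(S - 1) j k| ≤ 1 / (2 * (d:ℝ)^2) := by
                    have := hnear j k
                    simp only [Matrix.sub_apply] at *
                    linarith [this]
                  have := mul_le_mul_of_nonneg_right
                    (mul_le_mul_of_nonneg_left h1 (abs_nonneg (v j))) (abs_nonneg (v k))
                  calc |v j| * (|(S-1) j k| * |v k|)
                      = |v j| * |(S-1) j k| * |v k| := by ring
                    _ ≤ |v j| * (1 / (2 * (d:ℝ)^2)) * |v k| := this
                    _ = |v j| * ((1 / (2 * (d:ℝ)^2)) * |v k|) := by ring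
        _ = (1 / (2 * (d:ℝ)^2)) * (∑ j, |v j|) * (∑ j, |v j|) := by
            simp [Finset.mul_sum, Finset.sum_mul]
            congr 1; ext j; congr 1; ext k; ring
    have hcs2 : (∑ j, |v j|) * (∑ j, |v j|) ≤ (d:ℝ) := by
      have := Finset.sum_mul_sq_le_sq_mul_sq Finset.univ (fun j => |v j|) (fun _ => (1:ℝ))
      simp [sq_abs] at this
      have hv1 : ∑ j, v j ^ 2 = 1 := hnorm i
      calc (∑ j, |v j|) * (∑ j, |v j|) = (∑ j, |v j|)^2 := (sq _).symm
        _ ≤ (∑ j, v j ^ 2) * (d:ℝ) := by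
            simpa [sq_abs, Finset.card_univ, mul_comm] using this
        _ = (d:ℝ) := by rw [hv1, one_mul]
    rw [hlam1]
    calc |∑ j, ∑ k, v j * ((S - 1) j k * v k)|
        ≤ (1 / (2 * (d:ℝ)^2)) * ((∑ j, |v j|) * (∑ j, |v j|)) := by
          rw [← mul_assoc]; exact hsum_abs
      _ ≤ (1 / (2 * (d:ℝ)^2)) * (d:ℝ) := by
          apply mul_le_mul_of_nonneg_left hcs2
          positivity
      _ = 1 / (2 * (d:ℝ)) := by field_simp
    done
  -- define coefficients
  set T : ℝ := (∑ i, lam i) / ((d:ℝ) - 1) with hT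
  set c : Fin d → ℝ := fun i => T - lam i with hc
  have hlam_le : ∀ i, lam i ≤ 1 + 1 / (2 * (d:ℝ)) := by
    intro i; have := abs_le.mp (habs i); linarith [this.2]
  have hlam_ge : ∀ i, 1 - 1 / (2 * (d:ℝ)) ≤ lam i := by
    intro i; have := abs_le.mp (habs i); linarith [this.1]
  have hsumlam : (d:ℝ) - 1/2 ≤ ∑ i, lam i := by
    have h1 : ∑ i, (1 - 1 / (2 * (d:ℝ))) ≤ ∑ i, lam i :=
      Finset.sum_le_sum (fun i _ => hlam_ge i)
    have h2 : ∑ _i : Fin d, (1 - 1 / (2 * (d:ℝ))) = (d:ℝ) * (1 - 1 / (2 * (d:ℝ))) := by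
      simp [Finset.card_univ, mul_comm]
      ring
    rw [h2] at h1
    have : (d:ℝ) * (1 - 1 / (2 * (d:ℝ))) = (d:ℝ) - 1/2 := by
      field_simp
    linarith
  have hcpos : ∀ i, 0 < c i := by
    intro i
    have h1 : lam i * ((d:ℝ) - 1) < ∑ j, lam j := by
      have hle : lam i * ((d:ℝ) - 1) ≤ (1 + 1 / (2 * (d:ℝ))) * ((d:ℝ) - 1) :=
        mul_le_mul_of_nonneg_right (hlam_le i) (by linarith)
      have harith : (1 + 1 / (2 * (d:ℝ))) * ((d:ℝ) - 1) < (d:ℝ) - 1/2 := by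
        have h2d : (0:ℝ) < 2 * (d:ℝ) := by linarith
        have heq : (1 + 1/(2*(d:ℝ))) * ((d:ℝ)-1) = ((2*(d:ℝ)+1)*((d:ℝ)-1))/(2*(d:ℝ)) := by
          field_simp
        rw [heq, div_lt_iff₀ h2d]
        nlinarith
      linarith
    have : lam i < T := by
      rw [hT, lt_div_iff₀ hD1]
      linarith
    simp [hc]; linarith
  -- sum of coefficients
  have hsumc : ∑ i, c i = T := by
    have h1 : ∑ i, c i = (d:ℝ) * T - ∑ i, lam i := by
      simp [hc, Finset.sum_sub_distrib, Finset.card_univ, mul_comm]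
    have h2 : ∑ i, lam i = ((d:ℝ) - 1) * T := by
      rw [hT]
      field_simp
    rw [h1, h2]; ring
  refine ⟨d, c, fun i => (fun j => U j i), hcpos, fun i => hnorm i, ?_⟩
  have hdc : Matrix.diagonal c = T • (1 : Matrix (Fin d) (Fin d) ℝ) - Matrix.diagonal lam := by
    ext j k
    by_cases hjk : j = k
    · subst hjk; simp [Matrix.diagonal_apply, hc, Matrix.one_apply]
    · simp [Matrix.diagonal_apply, hjk, Matrix.one_apply]
  show S = ∑ i, c i • ((1 : Matrix (Fin d) (Fin d) ℝ) - Matrix.vecMulVec (fun j => U j i) (fun j => U j i))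
  refine Eq.symm ?_
  calc ∑ i, c i • ((1 : Matrix (Fin d) (Fin d) ℝ) - Matrix.vecMulVec (fun j => U j i) (fun j => U j i))
      = ∑ i, (c i • (1 : Matrix (Fin d) (Fin d) ℝ) - c i • Matrix.vecMulVec (fun j => U j i) (fun j => U j i)) := by
        simp [smul_sub]
    _ = (∑ i, c i) • (1 : Matrix (Fin d) (Fin d) ℝ) - ∑ i, c i • Matrix.vecMulVec (fun j => U j i) (fun j => U j i) := by
        rw [Finset.sum_sub_distrib, ← Finset.sum_smul]
    _ = S := by
        rw [hsumc, col_sum_diag, hdc, Matrix.mul_sub, Matrix.sub_mul, Matrix.mul_smul, mul_one,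
          Matrix.smul_mul, hUU, ← hspec, sub_sub_cancel]

/-- For every `d ≥ 2`, every element of `M_d` is positive definite, and the identity
matrix belongs to `M_d`. -/
theorem Md_subset_posDef_and_id_mem (d : ℕ) (hd : 2 ≤ d) :
    (∀ R ∈ Md d, R.PosDef) ∧ (1 : Matrix (Fin d) (Fin d) ℝ) ∈ Md d := by
  have hDpos : (0:ℝ) < (d:ℝ) := by
    have : (2:ℝ) ≤ (d:ℝ) := by exact_mod_cast hd
    linarith
  constructor
  · rintro R ⟨hsym, U, hUo, hRU, hUsub⟩
    have hcont : Continuous (fun t : ℝ => R - t • (1 : Matrix (Fin d) (Fin d) ℝ)) := by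
      exact continuous_const.sub (continuous_id.smul continuous_const)
    have hpre : IsOpen ((fun t : ℝ => R - t • (1 : Matrix (Fin d) (Fin d) ℝ)) ⁻¹' U) :=
      hUo.preimage hcont
    have h0mem : (0:ℝ) ∈ (fun t : ℝ => R - t • (1 : Matrix (Fin d) (Fin d) ℝ)) ⁻¹' U := by
      simpa using hRU
    obtain ⟨ε, hε, hball⟩ := Metric.isOpen_iff.mp hpre 0 h0mem
    set t : ℝ := ε / 2 with htdef
    have ht : 0 < t := by positivity
    have hmem : R - t • (1 : Matrix (Fin d) (Fin d) ℝ) ∈ U := by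
      apply hball
      simp only [Metric.mem_ball, Real.dist_eq, htdef, sub_zero]
      rw [abs_of_pos (by positivity)]
      linarith
    have hsymS : (R - t • (1 : Matrix (Fin d) (Fin d) ℝ)).IsSymm := by
      unfold Matrix.IsSymm
      rw [Matrix.transpose_sub, Matrix.transpose_smul, Matrix.transpose_one, hsym]
    have hconic := hUsub _ hmem hsymS
    refine Matrix.PosDef.of_dotProduct_mulVec_pos (by rwa [Matrix.IsHermitian, Matrix.conjTranspose_eq_transpose_of_trivial]) (fun x hx => ?_)
    have hq := mdConic_quad_nonneg hconic x
    have hxx : 0 < x ⬝ᵥ x := by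
      rcases lt_or_eq_of_le (Finset.sum_nonneg (fun i (_ : i ∈ Finset.univ) => mul_self_nonneg (x i))
        : (0:ℝ) ≤ x ⬝ᵥ x) with h' | h'
      · exact h'
      · exact absurd (dotProduct_self_eq_zero.mp h'.symm) hx
    have hR : R = (R - t • (1 : Matrix (Fin d) (Fin d) ℝ)) + t • (1 : Matrix (Fin d) (Fin d) ℝ) := by
      rw [sub_add_cancel]
    rw [star_trivial, hR, Matrix.add_mulVec, dotProduct_add, Matrix.smul_mulVec,
      Matrix.one_mulVec, dotProduct_smul]
    have : 0 < t * (x ⬝ᵥ x) := mul_pos ht hxx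
    simp only [smul_eq_mul]
    linarith
  · refine ⟨Matrix.isSymm_one,
      {S : Matrix (Fin d) (Fin d) ℝ | ∀ j k, |S j k - (1 : Matrix (Fin d) (Fin d) ℝ) j k|
        < 1 / (2 * (d:ℝ)^2)}, ?_, ?_, ?_⟩
    · have heq : {S : Matrix (Fin d) (Fin d) ℝ | ∀ j k, |S j k - (1 : Matrix (Fin d) (Fin d) ℝ) j k|
          < 1 / (2 * (d:ℝ)^2)}
        = ⋂ j, ⋂ k, (fun S : Matrix (Fin d) (Fin d) ℝ => S j k) ⁻¹'
            (Metric.ball ((1 : Matrix (Fin d) (Fin d) ℝ) j k) (1 / (2 * (d:ℝ)^2))) := by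
        ext S
        simp [Real.dist_eq]
      rw [heq]
      exact isOpen_iInter_of_finite fun j => isOpen_iInter_of_finite fun k =>
        Metric.isOpen_ball.preimage ((continuous_apply k).comp (continuous_apply j))
    · intro j k
      simp
      positivity
    · intro S hSU hSsym
      exact near_one_mem_mdConic hd S hSsym hSU
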